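/- Let E be a real Banach space, P a topological space, T ⊆ ℝ an interval, t0 ∈ T, x0 ∈ E, p0 ∈ P, and X : ℝ × E × P → E. Suppose there exist r > 0, α > 0, λ ∈ (0,1), an open neighbourhood O of p0, and integrable functions h, ℓ : ℝ → ℝ on I := T ∩ [t0 − α, t0 + α] such that, with B := closedBall x0 (2r): (i) for every x ∈ B and p ∈ O, s ↦ X(s, x, p) is measurable on I; (ii) for every s ∈ I and p ∈ O, y ↦ X(s, y, p) is continuous on B; (iii) ‖X(s, y, p)‖ ≤ h(s) for all s ∈ I, y ∈ B, p ∈ O, and ∫_I h(s) ds < r; (iv) ‖X(s, x1, p) − X(s, x2, p)‖ ≤ ℓ(s) ‖x1 − x2‖ for all s ∈ I, x1, x2 ∈ B, p ∈ O, and ∫_I ℓ(s) ds ≤ λ. For x ∈ closedBall x0 r and p ∈ O let Φ(·, x, p) : I → E be the unique continuous curve with ‖Φ(t, x, p) − x‖ ≤ r on I and Φ(t, x, p) = x + ∫_{t0}^{t} X(s, Φ(s, x, p), p) ds. Then there exist r'' ∈ (0, r], α'' ∈ (0, α], a neighbourhood O'' ⊆ O of p0, and a constant C ≥ 1 such that for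 every t ∈ T ∩ [t0 − α'', t0 + α''] and every p ∈ O'', the map x ↦ Φ(t, x, p) is injective on closedBall x0 r'' and satisfies C⁻¹ ‖x1 − x2‖ ≤ ‖Φ(t, x1, p) − Φ(t, x2, p)‖ ≤ C ‖x1 − x2‖ for all x1, x2 ∈ closedBall x0 r''. -/

import Mathlib

open Set MeasureTheory intervalIntegral
open scoped Interval

/-- Part (iii) of the paper's Lemma 3.7 in the Banach-space local model: near
`(t0, x0, p0)` the fixed-time flow maps are bi-Lipschitz (in particular injective)
onto their images, uniformly in time and parameter. -/
theorem local_flow_biLipschitz_in_state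
    {E P : Type*} [NormedAddCommGroup E] [NormedSpace ℝ E] [CompleteSpace E]
    [TopologicalSpace P]
    (T : Set ℝ) (hT : T.OrdConnected) (t0 : ℝ) (ht0 : t0 ∈ T)
    (x0 : E) (p0 : P) (X : ℝ → E → P → E)
    (r α lam : ℝ) (hr : 0 < r) (hα : 0 < α) (hlam0 : 0 < lam) (hlam1 : lam < 1)
    (O : Set P) (hO : IsOpen O) (hp0 : p0 ∈ O)
    (I : Set ℝ) (B : Set E)
    (hI : I = T ∩ Icc (t0 - α) (t0 + α)) (hB : B = Metric.closedBall x0 (2 * r))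
    (h ℓ : ℝ → ℝ) (hhint : IntegrableOn h I) (hℓint : IntegrableOn ℓ I)
    (hXmeas : ∀ x ∈ B, ∀ p ∈ O,
      AEStronglyMeasurable (fun s => X s x p) (volume.restrict I))
    (hXcont : ∀ s ∈ I, ∀ p ∈ O, ContinuousOn (fun y => X s y p) B)
    (hXbd : ∀ s ∈ I, ∀ y ∈ B, ∀ p ∈ O, ‖X s y p‖ ≤ h s)
    (hhsmall : ∫ s in I, h s < r)
    (hXlip : ∀ s ∈ I, ∀ x1 ∈ B, ∀ x2 ∈ B, ∀ p ∈ O,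
      ‖X s x1 p - X s x2 p‖ ≤ ℓ s * ‖x1 - x2‖)
    (hℓsmall : ∫ s in I, ℓ s ≤ lam)
    (Φ : ℝ → E → P → E)
    (hΦ : ∀ x ∈ Metric.closedBall x0 r, ∀ p ∈ O,
      ContinuousOn (fun t => Φ t x p) I ∧ (∀ t ∈ I, ‖Φ t x p - x‖ ≤ r) ∧
      IntegrableOn (fun s => X s (Φ s x p) p) I ∧
      ∀ t ∈ I, Φ t x p = x + ∫ s in t0..t, X s (Φ s x p) p) :
    ∃ r'' : ℝ, r'' ∈ Ioc (0 : ℝ) r ∧ ∃ α'' : ℝ, α'' ∈ Ioc (0 : ℝ) α ∧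
      ∃ O'' : Set P, IsOpen O'' ∧ p0 ∈ O'' ∧ O'' ⊆ O ∧ ∃ C : ℝ, 1 ≤ C ∧
      ∀ t ∈ T ∩ Icc (t0 - α'') (t0 + α''), ∀ p ∈ O'',
        InjOn (fun x => Φ t x p) (Metric.closedBall x0 r'') ∧
        ∀ x1 ∈ Metric.closedBall x0 r'', ∀ x2 ∈ Metric.closedBall x0 r'',
          C⁻¹ * ‖x1 - x2‖ ≤ ‖Φ t x1 p - Φ t x2 p‖ ∧
          ‖Φ t x1 p - Φ t x2 p‖ ≤ C * ‖x1 - x2‖ := by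
  classical
  set μI := (volume : Measure ℝ).restrict I with hμI
  -- absolute continuity: find a small window where ∫ |ℓ| < 1/3
  obtain ⟨n, hn⟩ :
      ∃ n : ℕ, ∫ s in Icc (t0 - α / (n + 1)) (t0 + α / (n + 1)), |ℓ s| ∂μI < 1 / 3 := by
    have hanti : Antitone fun n : ℕ => Icc (t0 - α / (n + 1)) (t0 + α / (n + 1)) := by
      intro m k hmk
      apply Icc_subset_Icc
      · have : α / (k + 1) ≤ α / (m + 1) := by
          apply div_le_div_of_nonneg_left hα.le (by positivity)
          exact_mod_cast Nat.succ_le_succ hmk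
        linarith
      · have : α / (k + 1) ≤ α / (m + 1) := by
          apply div_le_div_of_nonneg_left hα.le (by positivity)
          exact_mod_cast Nat.succ_le_succ hmk
        linarith
    have hiInter : (⋂ n : ℕ, Icc (t0 - α / (n + 1)) (t0 + α / (n + 1))) = {t0} := by
      ext s
      simp only [mem_iInter, mem_Icc, mem_singleton_iff]
      constructor
      · intro hs
        have htend : Filter.Tendsto (fun n : ℕ => α / ((n : ℝ) + 1)) Filter.atTop (nhds 0) := by
          have h1 := (tendsto_const_div_atTop_nhds_zero_nat α).comp
            (Filter.tendsto_add_atTop_nat 1)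
          have h2 : (fun n : ℕ => α / ((n : ℝ) + 1)) =
              (fun n : ℕ => α / (n : ℝ)) ∘ fun a => a + 1 := by
            funext m; simp [Function.comp, Nat.cast_add, Nat.cast_one]
          rw [h2]; exact h1
        have habs : ∀ n : ℕ, |s - t0| ≤ α / ((n : ℝ) + 1) := fun n =>
          abs_sub_le_iff.2 ⟨by linarith [(hs n).2], by linarith [(hs n).1]⟩
        have : |s - t0| ≤ 0 := ge_of_tendsto' htend habs
        have := abs_nonneg (s - t0)
        have : |s - t0| = 0 := le_antisymm ‹|s - t0| ≤ 0› (abs_nonneg _)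
        have := abs_eq_zero.1 this
        linarith [sub_eq_zero.1 this]
      · rintro rfl n
        have : 0 < α / ((n : ℝ) + 1) := by positivity
        constructor <;> linarith
    have hintone : ∃ n : ℕ, IntegrableOn (fun s => |ℓ s|) (Icc (t0 - α / (n + 1)) (t0 + α / (n + 1))) μI := by
      refine ⟨0, ?_⟩
      have : Integrable (fun s => |ℓ s|) μI := by
        simpa [Real.norm_eq_abs] using hℓint.norm
      exact this.integrableOn
    have htendint := tendsto_setIntegral_of_antitone
      (f := fun s => |ℓ s|) (μ := μI)
      (fun n => measurableSet_Icc) hanti hintone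
    rw [hiInter] at htendint
    have hzero : ∫ s in ({t0} : Set ℝ), |ℓ s| ∂μI = 0 := by
      have hμ0 : μI ({t0} : Set ℝ) = 0 := by
        have h1 : μI ({t0} : Set ℝ) ≤ volume ({t0} : Set ℝ) :=
          Measure.restrict_le_self _
        simpa using le_antisymm (by simpa using h1) (zero_le _)
      rw [Measure.restrict_eq_zero.2 hμ0, integral_zero_measure]
    rw [hzero] at htendint
    exact (htendint.eventually_lt_const (by norm_num)).exists
  set α'' := α / (n + 1) with hα''def
  have hα''pos : 0 < α'' := by positivity
  have hα''le : α'' ≤ α := by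
    rw [hα''def]
    apply div_le_self hα.le
    have : (0 : ℝ) ≤ (n : ℝ) := Nat.cast_nonneg n
    linarith
  set J := Icc (t0 - α'') (t0 + α'') with hJdef
  have hJI : T ∩ J ⊆ I := by
    rw [hI]
    exact inter_subset_inter_right _ (Icc_subset_Icc (by linarith) (by linarith))
  have ht0J : t0 ∈ J := by
    constructor <;> [linarith; linarith]
  have ht0I : t0 ∈ I := hJI ⟨ht0, ht0J⟩
  refine ⟨r, ⟨hr, le_refl r⟩, α'', ⟨hα''pos, hα''le⟩, O, hO, hp0, subset_rfl, 2, by norm_num, ?_⟩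
  intro t ht p hp
  -- t ∈ I and the interval from t0 to t stays inside T ∩ J ⊆ I
  have htI : t ∈ I := hJI ht
  have huIccsub : uIcc t0 t ⊆ T ∩ J :=
    subset_inter (hT.uIcc_subset ht0 ht.1) (Set.ordConnected_Icc.uIcc_subset ht0J ht.2)
  have hΙsub : Ι t0 t ⊆ T ∩ J := (uIoc_subset_uIcc).trans huIccsub
  have hΙI : Ι t0 t ⊆ I := hΙsub.trans hJI
  have hΙJ : Ι t0 t ⊆ J := hΙsub.trans inter_subset_right
  -- main two-point estimate
  have key : ∀ x1 ∈ Metric.closedBall x0 r, ∀ x2 ∈ Metric.closedBall x0 r,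
      (1 / 2 : ℝ) * ‖x1 - x2‖ ≤ ‖Φ t x1 p - Φ t x2 p‖ ∧
      ‖Φ t x1 p - Φ t x2 p‖ ≤ 2 * ‖x1 - x2‖ := by
    intro x1 hx1 x2 hx2
    obtain ⟨hc1, hb1, hint1, heq1⟩ := hΦ x1 hx1 p hp
    obtain ⟨hc2, hb2, hint2, heq2⟩ := hΦ x2 hx2 p hp
    have hΦB : ∀ s ∈ I, ∀ x ∈ Metric.closedBall x0 r,
        (∀ u ∈ I, ‖Φ u x p - x‖ ≤ r) → Φ s x p ∈ B := by
      intro s hs x hx hbd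
      rw [hB, Metric.mem_closedBall, dist_eq_norm]
      calc ‖Φ s x p - x0‖ ≤ ‖Φ s x p - x‖ + ‖x - x0‖ := by
            have h3 := dist_triangle (Φ s x p) x x0
            simpa [dist_eq_norm] using h3
        _ ≤ r + r := add_le_add (hbd s hs) (by
            rw [← dist_eq_norm]; exact Metric.mem_closedBall.1 hx)
        _ = 2 * r := by ring
    set D : ℝ → ℝ := fun s => ‖Φ s x1 p - Φ s x2 p‖ with hD
    have hDnn : ∀ s, 0 ≤ D s := fun s => norm_nonneg _
    have hDbd : ∀ s ∈ T ∩ J, D s ≤ 2 * r + ‖x1 - x2‖ := by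
      intro s hs
      have hsI := hJI hs
      calc D s ≤ ‖Φ s x1 p - x1‖ + ‖x1 - x2‖ + ‖x2 - Φ s x2 p‖ := by
            have heq3 : Φ s x1 p - Φ s x2 p =
                Φ s x1 p - x1 + (x1 - x2) + (x2 - Φ s x2 p) := by abel
            rw [hD]
            simp only []
            rw [heq3]
            exact (norm_add_le _ _).trans (add_le_add_left (norm_add_le _ _) _)
        _ ≤ r + ‖x1 - x2‖ + r := by
            refine add_le_add (add_le_add (hb1 s hsI) le_rfl) ?_
            rw [norm_sub_rev]; exact hb2 s hsI
        _ = 2 * r + ‖x1 - x2‖ := by ring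
    have hne : ((D '' (T ∩ J))).Nonempty := ⟨D t0, mem_image_of_mem _ ⟨ht0, ht0J⟩⟩
    have hbdd : BddAbove (D '' (T ∩ J)) := by
      refine ⟨2 * r + ‖x1 - x2‖, ?_⟩
      rintro _ ⟨s, hs, rfl⟩
      exact hDbd s hs
    set M := sSup (D '' (T ∩ J)) with hM
    have hM0 : 0 ≤ M :=
      le_trans (hDnn t0) (le_csSup hbdd (mem_image_of_mem _ ⟨ht0, ht0J⟩))
    have hDleM : ∀ s ∈ T ∩ J, D s ≤ M := fun s hs =>
      le_csSup hbdd (mem_image_of_mem _ hs)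
    -- deviation estimate, valid for every time u ∈ T ∩ J
    have hdev : ∀ u ∈ T ∩ J, ‖(Φ u x1 p - Φ u x2 p) - (x1 - x2)‖ ≤ M * (1 / 3) := by
      intro u hu
      have huI : u ∈ I := hJI hu
      have huIcc : uIcc t0 u ⊆ T ∩ J :=
        subset_inter (hT.uIcc_subset ht0 hu.1) (Set.ordConnected_Icc.uIcc_subset ht0J hu.2)
      have huΙ : Ι t0 u ⊆ T ∩ J := (uIoc_subset_uIcc).trans huIcc
      have huΙI : Ι t0 u ⊆ I := huΙ.trans hJI
      have huΙJ : Ι t0 u ⊆ J := huΙ.trans inter_subset_right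
      have hii1 : IntervalIntegrable (fun s => X s (Φ s x1 p) p) volume t0 u :=
        intervalIntegrable_iff.2 (hint1.mono_set huΙI)
      have hii2 : IntervalIntegrable (fun s => X s (Φ s x2 p) p) volume t0 u :=
        intervalIntegrable_iff.2 (hint2.mono_set huΙI)
      have heqd : (Φ u x1 p - Φ u x2 p) - (x1 - x2) =
          ∫ s in t0..u, (X s (Φ s x1 p) p - X s (Φ s x2 p) p) := by
        rw [heq1 u huI, heq2 u huI, intervalIntegral.integral_sub hii1 hii2]
        abel
      rw [heqd]
      have hmsΙ : MeasurableSet (Ι t0 u) := measurableSet_uIoc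
      have step1 : ‖∫ s in t0..u, (X s (Φ s x1 p) p - X s (Φ s x2 p) p)‖ ≤
          ∫ s in Ι t0 u, ‖X s (Φ s x1 p) p - X s (Φ s x2 p) p‖ :=
        intervalIntegral.norm_integral_le_integral_norm_uIoc
      have hdiffint : IntegrableOn
          (fun s => ‖X s (Φ s x1 p) p - X s (Φ s x2 p) p‖) (Ι t0 u) volume :=
        ((hint1.mono_set huΙI).sub (hint2.mono_set huΙI)).norm
      have hMlint : IntegrableOn (fun s => M * |ℓ s|) (Ι t0 u) volume := by
        have : IntegrableOn (fun s => |ℓ s|) (Ι t0 u) volume := by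
          have h1 : IntegrableOn (fun s => |ℓ s|) I volume := by
            exact (by simpa [Real.norm_eq_abs] using hℓint.norm : Integrable (fun s => |ℓ s|) (volume.restrict I))
          exact h1.mono_set huΙI
        exact this.const_mul M
      have step2 : ∫ s in Ι t0 u, ‖X s (Φ s x1 p) p - X s (Φ s x2 p) p‖ ≤
          ∫ s in Ι t0 u, M * |ℓ s| := by
        refine setIntegral_mono_on hdiffint hMlint hmsΙ ?_
        intro s hs
        have hsI : s ∈ I := huΙI hs
        have hB1 : Φ s x1 p ∈ B := hΦB s hsI x1 hx1 hb1
        have hB2 : Φ s x2 p ∈ B := hΦB s hsI x2 hx2 hb2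
        calc ‖X s (Φ s x1 p) p - X s (Φ s x2 p) p‖ ≤ ℓ s * D s :=
              hXlip s hsI _ hB1 _ hB2 p hp
          _ ≤ |ℓ s| * D s := mul_le_mul_of_nonneg_right (le_abs_self _) (hDnn s)
          _ ≤ |ℓ s| * M := mul_le_mul_of_nonneg_left (hDleM s (huΙ hs)) (abs_nonneg _)
          _ = M * |ℓ s| := mul_comm _ _
      have step3 : ∫ s in Ι t0 u, M * |ℓ s| = M * ∫ s in Ι t0 u, |ℓ s| ∂μI := by
        rw [MeasureTheory.integral_const_mul]
        congr 1
        rw [hμI, Measure.restrict_restrict hmsΙ, inter_eq_self_of_subset_left huΙI]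
      have step4 : ∫ s in Ι t0 u, |ℓ s| ∂μI ≤ ∫ s in J, |ℓ s| ∂μI := by
        apply setIntegral_mono_set
        · have h1 : Integrable (fun s => |ℓ s|) μI := by
            simpa [Real.norm_eq_abs] using hℓint.norm
          exact h1.integrableOn
        · exact Filter.Eventually.of_forall fun s => abs_nonneg _
        · exact Filter.Eventually.of_forall huΙJ
      have step5 : ∫ s in J, |ℓ s| ∂μI ≤ 1 / 3 := le_of_lt hn
      calc ‖∫ s in t0..u, (X s (Φ s x1 p) p - X s (Φ s x2 p) p)‖
          ≤ ∫ s in Ι t0 u, M * |ℓ s| := step1.trans step2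
        _ = M * ∫ s in Ι t0 u, |ℓ s| ∂μI := step3
        _ ≤ M * (1 / 3) := by
            refine mul_le_mul_of_nonneg_left (step4.trans step5) hM0
    -- conclude: M ≤ (3/2) ‖x1 - x2‖
    have hMle : M ≤ ‖x1 - x2‖ + M * (1 / 3) := by
      apply csSup_le hne
      rintro _ ⟨u, hu, rfl⟩
      calc D u = ‖(x1 - x2) + ((Φ u x1 p - Φ u x2 p) - (x1 - x2))‖ := by
            rw [hD]; congr 1; abel
        _ ≤ ‖x1 - x2‖ + ‖(Φ u x1 p - Φ u x2 p) - (x1 - x2)‖ := norm_add_le _ _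
        _ ≤ ‖x1 - x2‖ + M * (1 / 3) := add_le_add_right (hdev u hu) _
    have hM32 : M ≤ 3 / 2 * ‖x1 - x2‖ := by linarith
    have hdevt : ‖(Φ t x1 p - Φ t x2 p) - (x1 - x2)‖ ≤ 1 / 2 * ‖x1 - x2‖ := by
      calc ‖(Φ t x1 p - Φ t x2 p) - (x1 - x2)‖ ≤ M * (1 / 3) := hdev t ht
        _ ≤ 3 / 2 * ‖x1 - x2‖ * (1 / 3) := by
            exact mul_le_mul_of_nonneg_right hM32 (by norm_num)
        _ = 1 / 2 * ‖x1 - x2‖ := by ring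
    constructor
    · have : ‖x1 - x2‖ - ‖Φ t x1 p - Φ t x2 p‖ ≤ 1 / 2 * ‖x1 - x2‖ := by
        calc ‖x1 - x2‖ - ‖Φ t x1 p - Φ t x2 p‖
            ≤ ‖(x1 - x2) - (Φ t x1 p - Φ t x2 p)‖ := norm_sub_norm_le _ _
          _ = ‖(Φ t x1 p - Φ t x2 p) - (x1 - x2)‖ := norm_sub_rev _ _
          _ ≤ 1 / 2 * ‖x1 - x2‖ := hdevt
      linarith
    · have : ‖Φ t x1 p - Φ t x2 p‖ - ‖x1 - x2‖ ≤ 1 / 2 * ‖x1 - x2‖ := by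
        calc ‖Φ t x1 p - Φ t x2 p‖ - ‖x1 - x2‖
            ≤ ‖(Φ t x1 p - Φ t x2 p) - (x1 - x2)‖ := norm_sub_norm_le _ _
          _ ≤ 1 / 2 * ‖x1 - x2‖ := hdevt
      have hnn : 0 ≤ ‖x1 - x2‖ := norm_nonneg _
      linarith
  constructor
  · intro x1 hx1 x2 hx2 heq
    have hlow := (key x1 hx1 x2 hx2).1
    simp only [] at heq
    rw [heq] at hlow
    simp only [sub_self, norm_zero] at hlow
    have : ‖x1 - x2‖ ≤ 0 := by
      nlinarith [norm_nonneg (x1 - x2)]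
    have : ‖x1 - x2‖ = 0 := le_antisymm this (norm_nonneg _)
    exact sub_eq_zero.1 (norm_eq_zero.1 this)
  · intro x1 hx1 x2 hx2
    obtain ⟨h1, h2⟩ := key x1 hx1 x2 hx2
    exact ⟨by rw [show (2 : ℝ)⁻¹ = 1 / 2 by norm_num]; exact h1, h2⟩
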